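/- Let H be a finite-dimensional complex vector space with a nondegenerate symmetric bilinear form, A ⊆ H a subspace on which the form restricts nondegenerately, and T = A^⊥, with O(T) acting on H by the identity on A. Then the restriction of the induced bilinear form on H^{⊗n} to the subspace (H^{⊗n})^{O(T),det} is nondegenerate; in particular, for every nonzero B ∈ (H^{⊗n})^{O(T),det} there exists B^∨ ∈ (H^{⊗n})^{O(T),det} with ⟨B, B^∨⟩ = 1. -/

import Mathlib

open scoped TensorProduct
open PiTensorProduct

noncomputable section

variable {H : Type*} [AddCommGroup H] [Module ℂ H]

/-- `φ : H ≃ H` is the extension of an isometry of `T = A^⊥` by the identity on `A`: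
it fixes `A` pointwise, preserves `T`, and preserves the bilinear form `B`. -/
structure IsExtIsometry (B : H →ₗ[ℂ] H →ₗ[ℂ] ℂ) (A T : Submodule ℂ H)
    (φ : H ≃ₗ[ℂ] H) : Prop where
  fixA : ∀ a ∈ A, φ a = a
  mapsT : ∀ x ∈ T, (φ : H →ₗ[ℂ] H) x ∈ T
  isom : ∀ x y, B (φ x) (φ y) = B x y

/-- The determinant `det(φ|_T)` of `φ` restricted to `T`. -/
def detOnT (T : Submodule ℂ H) (φ : H ≃ₗ[ℂ] H)
    (h : ∀ x ∈ T, (φ : H →ₗ[ℂ] H) x ∈ T) : ℂ :=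
  LinearMap.det ((φ : H →ₗ[ℂ] H).restrict h)

/-- The diagonal action of `φ` on `H^{⊗n}`. -/
def diagMap (n : ℕ) (φ : H ≃ₗ[ℂ] H) : (⨂[ℂ]^n H) →ₗ[ℂ] ⨂[ℂ]^n H :=
  PiTensorProduct.map fun _ : Fin n => (φ : H →ₗ[ℂ] H)

/-- The `O(T)`-invariant vectors of `H^{⊗n}`. -/
def OInv (B : H →ₗ[ℂ] H →ₗ[ℂ] ℂ) (A T : Submodule ℂ H) (n : ℕ) :
    Set (⨂[ℂ]^n H) :=
  {v | ∀ φ : H ≃ₗ[ℂ] H, IsExtIsometry B A T φ → diagMap n φ v = v}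

/-- The det-twisted vectors `(H^{⊗n})^{O(T),det}`. -/
def DetTw (B : H →ₗ[ℂ] H →ₗ[ℂ] ℂ) (A T : Submodule ℂ H) (n : ℕ) :
    Set (⨂[ℂ]^n H) :=
  {v | ∀ (φ : H ≃ₗ[ℂ] H) (h : IsExtIsometry B A T φ),
    diagMap n φ v = detOnT T φ h.mapsT • v}

/-- The `SO(T)`-invariant vectors of `H^{⊗n}`. -/
def SOInv (B : H →ₗ[ℂ] H →ₗ[ℂ] ℂ) (A T : Submodule ℂ H) (n : ℕ) :
    Set (⨂[ℂ]^n H) :=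
  {v | ∀ (φ : H ≃ₗ[ℂ] H) (h : IsExtIsometry B A T φ),
    detOnT T φ h.mapsT = 1 → diagMap n φ v = v}


section Aux

open Module

variable {H : Type*} [AddCommGroup H] [Module ℂ H]

private lemma dtpnONB (V : Type*) [AddCommGroup V] [Module ℂ V] [FiniteDimensional ℂ V]
    (Bv : V →ₗ[ℂ] V →ₗ[ℂ] ℂ) (hs : ∀ x y, Bv x y = Bv y x)
    (hn : ∀ x, (∀ y, Bv x y = 0) → x = 0) :
    ∃ v : Basis (Fin (finrank ℂ V)) ℂ V, ∀ i j, Bv (v i) (v j) = if i = j then 1 else 0 := by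
  have hsymm : Bv.IsSymm := ⟨fun x y => by simpa using hs x y⟩
  obtain ⟨v, hv⟩ := LinearMap.BilinForm.exists_orthogonal_basis hsymm
  have hd : ∀ i, Bv (v i) (v i) ≠ 0 := by
    intro i h0
    have : Bv (v i) = 0 := by
      apply v.ext
      intro j
      rcases eq_or_ne i j with rfl | hij
      · simpa using h0
      · simpa using hv hij
    exact v.ne_zero i (hn _ (fun y => by rw [this]; rfl))
  choose z hz using fun i =>
    (Complex.isAlgClosed.exists_pow_nat_eq (Bv (v i) (v i)) (n := 2) (by norm_num))
  have hz0 : ∀ i, z i ≠ 0 := by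
    intro i h0
    exact hd i (by rw [← hz i, h0]; ring)
  refine ⟨v.unitsSMul (fun i => (Units.mk0 (z i) (hz0 i))⁻¹), ?_⟩
  intro i j
  rw [Basis.unitsSMul_apply, Basis.unitsSMul_apply]
  simp only [Units.smul_def, Units.val_inv_eq_inv_val, Units.val_mk0, map_smul,
    LinearMap.smul_apply, smul_eq_mul]
  rcases eq_or_ne i j with rfl | hij
  · have h2 : Bv (v i) (v i) = z i ^ 2 := (hz i).symm
    rw [if_pos rfl, h2]
    rw [sq, inv_mul_cancel_left₀ (hz0 i), inv_mul_cancel₀ (hz0 i)]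
  · rw [hv hij, if_neg hij]; ring

private lemma dtpnCompl [FiniteDimensional ℂ H]
    (B : H →ₗ[ℂ] H →ₗ[ℂ] ℂ)
    (hsymm : ∀ x y, B x y = B y x)
    (A : Submodule ℂ H)
    (hAnd : ∀ x ∈ A, (∀ y ∈ A, B x y = 0) → x = 0)
    (T : Submodule ℂ H)
    (hT : ∀ x, x ∈ T ↔ ∀ a ∈ A, B a x = 0) : IsCompl A T := by
  constructor
  · rw [Submodule.disjoint_def]
    intro x hxA hxT
    exact hAnd x hxA (fun y hy => by rw [hsymm]; exact (hT x).1 hxT y hy)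
  · rw [codisjoint_iff, eq_top_iff]
    intro x _
    have hr : Function.Surjective (B.compl₁₂ A.subtype A.subtype) := by
      have hfr : finrank ℂ A = finrank ℂ (Module.Dual ℂ A) := (Subspace.dual_finrank_eq).symm
      rw [← LinearMap.injective_iff_surjective_of_finrank_eq_finrank hfr]
      rw [← LinearMap.ker_eq_bot, Submodule.eq_bot_iff]
      intro a ha
      rw [LinearMap.mem_ker] at ha
      have h0 : ∀ y ∈ A, B (a : H) y = 0 := by
        intro y hy
        have := congrFun (congrArg DFunLike.coe ha) ⟨y, hy⟩
        simpa using this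
      exact Subtype.ext (hAnd (a : H) a.2 h0)
    obtain ⟨a, ha⟩ := hr ((B.flip x).comp A.subtype)
    have hxa : x - (a : H) ∈ T := by
      rw [hT]
      intro y hy
      have h1 := congrFun (congrArg DFunLike.coe ha) ⟨y, hy⟩
      simp only [LinearMap.compl₁₂_apply, Submodule.coe_subtype, LinearMap.comp_apply,
        LinearMap.flip_apply] at h1
      rw [map_sub, hsymm y (a : H), h1]
      simp
    have hx : x = (a : H) + (x - a) := by abel
    rw [hx]
    exact Submodule.add_mem_sup a.2 hxa

variable {ι : Type*} [Fintype ι] [DecidableEq ι]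

private def dtpnE (b : Basis ι ℂ H) (n : ℕ) (I : Fin n → ι) : ⨂[ℂ]^n H :=
  ⨂ₜ[ℂ] j, b (I j)

private lemma dtpnExpand (b : Basis ι ℂ H) (n : ℕ) (f : H →ₗ[ℂ] H) (I : Fin n → ι) :
    PiTensorProduct.map (fun _ : Fin n => f) (dtpnE b n I)
      = ∑ K : Fin n → ι, (∏ j, (LinearMap.toMatrix b b f) (K j) (I j)) • dtpnE b n K := by
  rw [dtpnE, PiTensorProduct.map_tprod]
  have hfb : ∀ j : Fin n, f (b (I j)) = ∑ k, (LinearMap.toMatrix b b f) k (I j) • b k := by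
    intro j
    simp_rw [LinearMap.toMatrix_apply]
    exact (b.sum_repr (f (b (I j)))).symm
  calc (PiTensorProduct.tprod ℂ) (fun j => f (b (I j)))
      = (PiTensorProduct.tprod ℂ) (fun j => ∑ k, (LinearMap.toMatrix b b f) k (I j) • b k) := by
        congr 1; funext j; exact hfb j
    _ = ∑ K : Fin n → ι, (PiTensorProduct.tprod ℂ)
          (fun j => (LinearMap.toMatrix b b f) (K j) (I j) • b (K j)) :=
        (PiTensorProduct.tprod ℂ).map_sum (fun j k => (LinearMap.toMatrix b b f) k (I j) • b k)
    _ = ∑ K : Fin n → ι, (∏ j, (LinearMap.toMatrix b b f) (K j) (I j)) • dtpnE b n K := by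
        refine Finset.sum_congr rfl (fun K _ => ?_)
        exact (PiTensorProduct.tprod ℂ).map_smul_univ
          (fun j => (LinearMap.toMatrix b b f) (K j) (I j)) (fun j => b (K j))

private lemma dtpnEval (b : Basis ι ℂ H) (n : ℕ) (c : (Fin n → ι) → ℂ) (K : Fin n → ι) :
    (PiTensorProduct.lift ((MultilinearMap.mkPiAlgebra ℂ (Fin n) ℂ).compLinearMap
        (fun j => b.coord (K j)))) (∑ I : Fin n → ι, c I • dtpnE b n I) = c K := by
  rw [map_sum]
  have h1 : ∀ I : Fin n → ι,
      (PiTensorProduct.lift ((MultilinearMap.mkPiAlgebra ℂ (Fin n) ℂ).compLinearMap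
        (fun j => b.coord (K j)))) (c I • dtpnE b n I)
      = if I = K then c I else 0 := by
    intro I
    rw [map_smul, dtpnE, PiTensorProduct.lift.tprod]
    simp only [MultilinearMap.compLinearMap_apply, MultilinearMap.mkPiAlgebra_apply,
      Basis.coord_apply, Basis.repr_self]
    have h2 : (∏ j, (Finsupp.single (I j) (1:ℂ)) (K j)) = if I = K then 1 else 0 := by
      rcases eq_or_ne I K with rfl | hIK
      · simp [Finsupp.single_apply]
      · have hj0 : ∃ j, I j ≠ K j := Function.ne_iff.1 hIK
        obtain ⟨j, hj⟩ := hj0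
        have hz : (Finsupp.single (I j) (1:ℂ)) (K j) = 0 := by
          rw [Finsupp.single_apply, if_neg hj]
        rw [if_neg hIK]
        exact Finset.prod_eq_zero (Finset.mem_univ j) hz
    rw [h2, smul_eq_mul, mul_ite, mul_one, mul_zero]
  rw [Finset.sum_congr rfl (fun I _ => h1 I), Finset.sum_ite_eq' Finset.univ K c,
    if_pos (Finset.mem_univ K)]

private lemma dtpnUniq (b : Basis ι ℂ H) (n : ℕ) (c c' : (Fin n → ι) → ℂ)
    (h : ∑ I : Fin n → ι, c I • dtpnE b n I = ∑ I : Fin n → ι, c' I • dtpnE b n I) :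
    c = c' := by
  funext K
  have := congrArg (PiTensorProduct.lift ((MultilinearMap.mkPiAlgebra ℂ (Fin n) ℂ).compLinearMap
        (fun j => b.coord (K j)))) h
  rwa [dtpnEval, dtpnEval] at this

private lemma dtpnSpan (b : Basis ι ℂ H) (n : ℕ) (v : ⨂[ℂ]^n H) :
    ∃ c : (Fin n → ι) → ℂ, v = ∑ I : Fin n → ι, c I • dtpnE b n I := by
  have hsp : Submodule.span ℂ (Set.range (dtpnE b n)) = ⊤ := by
    rw [eq_top_iff, ← PiTensorProduct.span_tprod_eq_top, Submodule.span_le]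
    rintro z ⟨x, rfl⟩
    have hx : (PiTensorProduct.tprod ℂ) x
        = ∑ K : Fin n → ι, (∏ j, b.repr (x j) (K j)) • dtpnE b n K := by
      calc (PiTensorProduct.tprod ℂ) x
          = (PiTensorProduct.tprod ℂ) (fun j => ∑ k, b.repr (x j) k • b k) := by
            congr 1; funext j; exact (b.sum_repr (x j)).symm
        _ = ∑ K : Fin n → ι, (PiTensorProduct.tprod ℂ)
              (fun j => b.repr (x j) (K j) • b (K j)) :=
            (PiTensorProduct.tprod ℂ).map_sum _
        _ = _ := by
            refine Finset.sum_congr rfl (fun K _ => ?_)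
            exact (PiTensorProduct.tprod ℂ).map_smul_univ _ _
    rw [hx]
    exact Submodule.sum_mem _ (fun K _ => Submodule.smul_mem _ _
      (Submodule.subset_span ⟨K, rfl⟩))
  have hv : v ∈ Submodule.span ℂ (Set.range (dtpnE b n)) := by rw [hsp]; trivial
  obtain ⟨c, hc⟩ := (Submodule.mem_span_range_iff_exists_fun ℂ).1 hv
  exact ⟨c, hc.symm⟩

private lemma dtpnCoord (b : Basis ι ℂ H) (n : ℕ) (f : H →ₗ[ℂ] H) (c : (Fin n → ι) → ℂ)
    (t : ℂ) :
    PiTensorProduct.map (fun _ : Fin n => f) (∑ I : Fin n → ι, c I • dtpnE b n I)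
        = t • ∑ I : Fin n → ι, c I • dtpnE b n I
    ↔ ∀ K : Fin n → ι,
        ∑ I : Fin n → ι, (∏ j, (LinearMap.toMatrix b b f) (K j) (I j)) * c I = t * c K := by
  have hL : PiTensorProduct.map (fun _ : Fin n => f) (∑ I : Fin n → ι, c I • dtpnE b n I)
      = ∑ K : Fin n → ι,
          (∑ I : Fin n → ι, (∏ j, (LinearMap.toMatrix b b f) (K j) (I j)) * c I)
            • dtpnE b n K := by
    rw [map_sum]
    simp_rw [map_smul, dtpnExpand b n f, Finset.smul_sum, smul_smul]
    rw [Finset.sum_comm]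
    simp_rw [← Finset.sum_smul]
    refine Finset.sum_congr rfl (fun K _ => ?_)
    congr 1
    exact Finset.sum_congr rfl (fun I _ => mul_comm _ _)
  have hR : t • (∑ I : Fin n → ι, c I • dtpnE b n I)
      = ∑ K : Fin n → ι, (t * c K) • dtpnE b n K := by
    rw [Finset.smul_sum]
    simp_rw [smul_smul]
  rw [hL, hR]
  constructor
  · intro h K
    exact congrFun (dtpnUniq b n _ _ h) K
  · intro h
    exact Finset.sum_congr rfl (fun K _ => by rw [h K])

private lemma dtpnPsi [FiniteDimensional ℂ H]
    (B : H →ₗ[ℂ] H →ₗ[ℂ] ℂ) (A T : Submodule ℂ H)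
    {ιA ιT : Type*} [Fintype ιA] [DecidableEq ιA] [Fintype ιT] [DecidableEq ιT]
    (bA : Basis ιA ℂ A) (bT : Basis ιT ℂ T)
    (b : Basis (ιA ⊕ ιT) ℂ H)
    (hbinl : ∀ i, b (Sum.inl i) = (bA i : H))
    (hbinr : ∀ s, b (Sum.inr s) = (bT s : H))
    (horth : ∀ i j, B (b i) (b j) = if i = j then 1 else 0)
    (φ : H ≃ₗ[ℂ] H) (hφ : IsExtIsometry B A T φ) :
    ∃ (ψ : H ≃ₗ[ℂ] H) (hψ : IsExtIsometry B A T ψ),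
      LinearMap.toMatrix b b (ψ : H →ₗ[ℂ] H)
        = (LinearMap.toMatrix b b (φ : H →ₗ[ℂ] H)).map (starRingEnd ℂ)
      ∧ detOnT T ψ hψ.mapsT = starRingEnd ℂ (detOnT T φ hφ.mapsT) := by
  classical
  set σ := starRingEnd ℂ with hσ
  set M := LinearMap.toMatrix b b (φ : H →ₗ[ℂ] H) with hM
  set N := LinearMap.toMatrix b b (φ.symm : H →ₗ[ℂ] H) with hN
  set ψl := Matrix.toLin b b (M.map σ) with hψl
  set ψi := Matrix.toLin b b (N.map σ) with hψi
  have hMN : M * N = 1 := by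
    rw [hM, hN, ← LinearMap.toMatrix_comp b b b, ← LinearMap.toMatrix_id b]
    congr 1
    ext x
    simp
  have hNM : N * M = 1 := by
    rw [hM, hN, ← LinearMap.toMatrix_comp b b b, ← LinearMap.toMatrix_id b]
    congr 1
    ext x
    simp
  have hcomp1 : ψl ∘ₗ ψi = LinearMap.id := by
    rw [hψl, hψi, ← Matrix.toLin_mul b b b, ← Matrix.map_mul, hMN,
      Matrix.map_one σ (map_zero σ) (map_one σ), Matrix.toLin_one]
  have hcomp2 : ψi ∘ₗ ψl = LinearMap.id := by
    rw [hψl, hψi, ← Matrix.toLin_mul b b b, ← Matrix.map_mul, hNM,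
      Matrix.map_one σ (map_zero σ) (map_one σ), Matrix.toLin_one]
  set ψ : H ≃ₗ[ℂ] H := LinearEquiv.ofLinear ψl ψi hcomp1 hcomp2 with hψdef
  have hψcoe : (ψ : H →ₗ[ℂ] H) = ψl := rfl
  have hψmat : LinearMap.toMatrix b b (ψ : H →ₗ[ℂ] H) = M.map σ := by
    rw [hψcoe, hψl, LinearMap.toMatrix_toLin]
  have hψb : ∀ i, ψ (b i) = ∑ k, σ (M k i) • b k := by
    intro i
    show ψl (b i) = _
    rw [hψl, Matrix.toLin_self]
    simp only [Matrix.map_apply]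
  have hφb : ∀ i, φ (b i) = ∑ k, M k i • b k := by
    intro i
    conv_lhs => rw [← b.sum_repr (φ (b i))]
    refine Finset.sum_congr rfl (fun k _ => ?_)
    rw [hM, LinearMap.toMatrix_apply]
    rfl
  have hMA : ∀ k i, M k (Sum.inl i) = if Sum.inl i = k then 1 else 0 := by
    intro k i
    rw [hM, LinearMap.toMatrix_apply]
    have h1 : (φ : H →ₗ[ℂ] H) (b (Sum.inl i)) = b (Sum.inl i) :=
      hφ.fixA _ (by rw [hbinl]; exact (bA i).2)
    rw [h1, Basis.repr_self_apply]
  have hexpA : ∀ a : A, (a : H) = ∑ i, bA.repr a i • b (Sum.inl i) := by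
    intro a
    conv_lhs => rw [← bA.sum_repr a]
    rw [Submodule.coe_sum]
    refine Finset.sum_congr rfl (fun i _ => ?_)
    rw [SetLike.val_smul, hbinl]
  have hexpT : ∀ x : T, (x : H) = ∑ s, bT.repr x s • b (Sum.inr s) := by
    intro x
    conv_lhs => rw [← bT.sum_repr x]
    rw [Submodule.coe_sum]
    refine Finset.sum_congr rfl (fun s _ => ?_)
    rw [SetLike.val_smul, hbinr]
  have hreprSum : ∀ (g : ιT → ℂ) (k : ιA ⊕ ιT),
      b.repr (∑ s, g s • b (Sum.inr s)) k = Sum.elim (fun _ => (0:ℂ)) g k := by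
    intro g k
    rw [map_sum, Finsupp.finset_sum_apply]
    simp only [map_smul, Finsupp.smul_apply, Basis.repr_self, smul_eq_mul]
    cases k with
    | inl i => simp [Finsupp.single_apply]
    | inr s => simp [Finsupp.single_apply]
  have hreprT0 : ∀ (x : T) (k : ιA), b.repr (x : H) (Sum.inl k) = 0 := by
    intro x k
    rw [hexpT x, hreprSum]
    rfl
  have hreprT1 : ∀ (x : T) (s : ιT), b.repr (x : H) (Sum.inr s) = bT.repr x s := by
    intro x s
    rw [hexpT x, hreprSum]
    rfl
  have hMT0 : ∀ (k : ιA) (t : ιT), M (Sum.inl k) (Sum.inr t) = 0 := by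
    intro k t
    rw [hM, LinearMap.toMatrix_apply]
    have hmem : (φ : H →ₗ[ℂ] H) (b (Sum.inr t)) ∈ T :=
      hφ.mapsT _ (by rw [hbinr]; exact (bT t).2)
    exact hreprT0 ⟨_, hmem⟩ k
  have hψbT : ∀ t, ψ (b (Sum.inr t))
      = ∑ s, σ (M (Sum.inr s) (Sum.inr t)) • b (Sum.inr s) := by
    intro t
    rw [hψb, Fintype.sum_sum_type]
    have hz : ∀ k : ιA, σ (M (Sum.inl k) (Sum.inr t)) • b (Sum.inl k) = 0 := by
      intro k
      rw [hMT0, map_zero, zero_smul]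
    rw [Finset.sum_congr rfl (fun k _ => hz k), Finset.sum_const_zero, zero_add]
  have hψbA : ∀ i, ψ (b (Sum.inl i)) = b (Sum.inl i) := by
    intro i
    rw [hψb]
    simp only [hMA, apply_ite σ, _root_.map_one, _root_.map_zero, ite_smul, one_smul,
      zero_smul]
    rw [Finset.sum_ite_eq]
    simp
  have hψA : ∀ a ∈ A, ψ a = a := by
    intro a ha
    have h1 : a = ∑ i, bA.repr ⟨a, ha⟩ i • b (Sum.inl i) := hexpA ⟨a, ha⟩
    conv_lhs => rw [h1]
    rw [map_sum]
    simp_rw [map_smul, hψbA]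
    exact h1.symm
  have hψT : ∀ x ∈ T, (ψ : H →ₗ[ℂ] H) x ∈ T := by
    intro x hx
    show ψ x ∈ T
    have h1 : x = ∑ s, bT.repr ⟨x, hx⟩ s • b (Sum.inr s) := hexpT ⟨x, hx⟩
    rw [h1, map_sum]
    refine Submodule.sum_mem _ (fun s _ => ?_)
    rw [map_smul, hψbT]
    refine Submodule.smul_mem _ _ (Submodule.sum_mem _
      (fun s' _ => Submodule.smul_mem _ _ ?_))
    rw [hbinr]
    exact (bT s').2
  have hBsum : ∀ u v : (ιA ⊕ ιT) → ℂ,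
      B (∑ i, u i • b i) (∑ j, v j • b j) = ∑ i, u i * v i := by
    intro u v
    have e1 : B (∑ i, u i • b i) = ∑ i, u i • B (b i) := by
      rw [map_sum]
      exact Finset.sum_congr rfl (fun i _ => by rw [map_smul])
    rw [e1, LinearMap.sum_apply]
    refine Finset.sum_congr rfl (fun i _ => ?_)
    rw [LinearMap.smul_apply, map_sum]
    simp only [map_smul, smul_eq_mul, horth, mul_ite, mul_one, mul_zero]
    rw [Finset.sum_ite_eq Finset.univ i v]
    simp
  have hMo : ∀ k l, B (φ (b k)) (φ (b l)) = ∑ i, M i k * M i l := by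
    intro k l
    rw [hφb k, hφb l, hBsum]
  have hMoψ : ∀ k l, B (ψ (b k)) (ψ (b l)) = ∑ i, σ (M i k) * σ (M i l) := by
    intro k l
    rw [hψb k, hψb l, hBsum]
  have hψbasis : ∀ k l, B (ψ (b k)) (ψ (b l)) = B (b k) (b l) := by
    intro k l
    rw [hMoψ]
    have h2 : ∑ i, σ (M i k) * σ (M i l) = σ (∑ i, M i k * M i l) := by
      rw [map_sum]
      exact Finset.sum_congr rfl (fun i _ => (map_mul σ _ _).symm)
    rw [h2, ← hMo, hφ.isom, horth]
    rcases eq_or_ne k l with rfl | hkl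
    · simp
    · rw [if_neg hkl]
      exact map_zero σ
  have hψisom : ∀ x y, B (ψ x) (ψ y) = B x y := by
    have hBψ : B.compl₁₂ ψl ψl = B := by
      refine LinearMap.ext_basis b b (fun i j => ?_)
      rw [LinearMap.compl₁₂_apply]
      exact hψbasis i j
    intro x y
    conv_rhs => rw [← hBψ]
    rw [LinearMap.compl₁₂_apply]
    rfl
  have hψ : IsExtIsometry B A T ψ := ⟨hψA, hψT, hψisom⟩
  refine ⟨ψ, hψ, hψmat, ?_⟩
  rw [detOnT, detOnT, ← LinearMap.det_toMatrix bT, ← LinearMap.det_toMatrix bT,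
    RingHom.map_det, RingHom.mapMatrix_apply]
  congr 1
  ext s t
  rw [Matrix.map_apply, LinearMap.toMatrix_apply, LinearMap.toMatrix_apply]
  have hcoeψ : (((ψ : H →ₗ[ℂ] H).restrict hψ.mapsT) (bT t) : H) = ψ (b (Sum.inr t)) := by
    rw [LinearMap.restrict_coe_apply, hbinr]
    rfl
  have hcoeφ : (((φ : H →ₗ[ℂ] H).restrict hφ.mapsT) (bT t) : H) = φ (b (Sum.inr t)) := by
    rw [LinearMap.restrict_coe_apply, hbinr]
    rfl
  rw [← hreprT1, ← hreprT1, hcoeψ, hcoeφ, hψbT]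
  rw [hreprSum]
  have hMrr : M (Sum.inr s) (Sum.inr t) = b.repr (φ (b (Sum.inr t))) (Sum.inr s) := by
    rw [hM, LinearMap.toMatrix_apply]
    rfl
  rw [← hMrr]
  rfl

end Aux

/-- Let `H` be a finite-dimensional complex vector space with nondegenerate symmetric
bilinear form `B`, `A ⊆ H` a subspace on which `B` restricts nondegenerately and
`T = A^⊥`, with `O(T)` acting on `H` by the identity on `A`. Then the restriction of the
induced bilinear form `BT` on `H^{⊗n}` (characterized on pure tensors by
`BT (x_1 ⊗ ⋯ ⊗ x_n) (y_1 ⊗ ⋯ ⊗ y_n) = ∏ i, B x_i y_i`) to `(H^{⊗n})^{O(T),det}` is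
nondegenerate; in particular every nonzero `v ∈ (H^{⊗n})^{O(T),det}` admits
`v^∨ ∈ (H^{⊗n})^{O(T),det}` with `BT v v^∨ = 1`. -/
theorem detTwisted_pairing_nondegenerate
    (H : Type*) [AddCommGroup H] [Module ℂ H] [FiniteDimensional ℂ H]
    (B : H →ₗ[ℂ] H →ₗ[ℂ] ℂ)
    (hsymm : ∀ x y, B x y = B y x)
    (hnd : ∀ x, (∀ y, B x y = 0) → x = 0)
    (A : Submodule ℂ H)
    (hAnd : ∀ x ∈ A, (∀ y ∈ A, B x y = 0) → x = 0)
    (T : Submodule ℂ H)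
    (hT : ∀ x, x ∈ T ↔ ∀ a ∈ A, B a x = 0)
    (n : ℕ)
    (BT : (⨂[ℂ]^n H) →ₗ[ℂ] (⨂[ℂ]^n H) →ₗ[ℂ] ℂ)
    (hBT : ∀ x y : Fin n → H,
      BT (⨂ₜ[ℂ] i, x i) (⨂ₜ[ℂ] i, y i) = ∏ i, B (x i) (y i)) :
    (∀ v ∈ DetTw B A T n, (∀ w ∈ DetTw B A T n, BT v w = 0) → v = 0)
    ∧ (∀ v ∈ DetTw B A T n, v ≠ 0 → ∃ w ∈ DetTw B A T n, BT v w = 1) := by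
  classical
  set σ := starRingEnd ℂ with hσdef
  -- orthonormal basis of A
  have hBA_symm : ∀ x y : A, (B.compl₁₂ A.subtype A.subtype) x y
      = (B.compl₁₂ A.subtype A.subtype) y x := by
    intro x y
    simp only [LinearMap.compl₁₂_apply, Submodule.coe_subtype]
    exact hsymm _ _
  have hBA_nd : ∀ x : A, (∀ y : A, (B.compl₁₂ A.subtype A.subtype) x y = 0) → x = 0 := by
    intro x hx
    refine Subtype.ext (hAnd (x : H) x.2 (fun y hy => ?_))
    have := hx ⟨y, hy⟩
    simpa using this
  obtain ⟨bA, hbA⟩ := dtpnONB A (B.compl₁₂ A.subtype A.subtype) hBA_symm hBA_nd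
  have hbA' : ∀ i j, B (bA i : H) (bA j : H) = if i = j then 1 else 0 := by
    intro i j
    have := hbA i j
    simpa using this
  -- A and T are complementary
  have hc : IsCompl A T := dtpnCompl B hsymm A hAnd T hT
  -- orthonormal basis of T
  have hBT_symm : ∀ x y : T, (B.compl₁₂ T.subtype T.subtype) x y
      = (B.compl₁₂ T.subtype T.subtype) y x := by
    intro x y
    simp only [LinearMap.compl₁₂_apply, Submodule.coe_subtype]
    exact hsymm _ _
  have hBT_nd : ∀ x : T, (∀ y : T, (B.compl₁₂ T.subtype T.subtype) x y = 0) → x = 0 := by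
    intro x hx
    refine Subtype.ext (hnd (x : H) (fun y => ?_))
    have hy : y ∈ A ⊔ T := by rw [hc.sup_eq_top]; trivial
    obtain ⟨a, haA, t, htT, rfl⟩ := Submodule.mem_sup.1 hy
    have h1 : B (x : H) a = 0 := by
      rw [hsymm]
      exact (hT (x : H)).1 x.2 a haA
    have h2 : B (x : H) t = 0 := by
      have := hx ⟨t, htT⟩
      simpa using this
    rw [map_add, h1, h2, add_zero]
  obtain ⟨bT, hbT⟩ := dtpnONB T (B.compl₁₂ T.subtype T.subtype) hBT_symm hBT_nd
  have hbT' : ∀ i j, B (bT i : H) (bT j : H) = if i = j then 1 else 0 := by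
    intro i j
    have := hbT i j
    simpa using this
  -- the adapted basis of H
  set b : Module.Basis (Fin (Module.finrank ℂ A) ⊕ Fin (Module.finrank ℂ T)) ℂ H :=
    (bA.prod bT).map (Submodule.prodEquivOfIsCompl A T hc) with hbdef
  have hbinl : ∀ i, b (Sum.inl i) = (bA i : H) := by
    intro i
    rw [hbdef, Module.Basis.map_apply, Module.Basis.prod_apply]
    simp
  have hbinr : ∀ s, b (Sum.inr s) = (bT s : H) := by
    intro s
    rw [hbdef, Module.Basis.map_apply, Module.Basis.prod_apply]
    simp
  have hAT0 : ∀ (a : H), a ∈ A → ∀ (t : H), t ∈ T → B a t = 0 := by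
    intro a ha t ht
    exact (hT t).1 ht a ha
  have horth : ∀ i j, B (b i) (b j) = if i = j then 1 else 0 := by
    intro i j
    cases i with
    | inl i =>
      cases j with
      | inl j =>
        rw [hbinl, hbinl, hbA']
        by_cases h : i = j <;> simp [h]
      | inr j =>
        rw [hbinl, hbinr, hAT0 _ (bA i).2 _ (bT j).2]
        simp
    | inr i =>
      cases j with
      | inl j =>
        rw [hbinr, hbinl, hsymm, hAT0 _ (bA j).2 _ (bT i).2]
        simp
      | inr j =>
        rw [hbinr, hbinr, hbT']
        by_cases h : i = j <;> simp [h]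
  -- pairing of basis tensors
  have hEE : ∀ I K : Fin n → _, BT (dtpnE b n I) (dtpnE b n K)
      = if I = K then 1 else 0 := by
    intro I K
    rw [dtpnE, dtpnE, hBT]
    have h2 : ∀ j, B (b (I j)) (b (K j)) = if I j = K j then 1 else 0 := fun j => horth _ _
    rw [Finset.prod_congr rfl (fun j _ => h2 j)]
    rcases eq_or_ne I K with rfl | hIK
    · simp
    · obtain ⟨j, hj⟩ := Function.ne_iff.1 hIK
      rw [if_neg hIK]
      exact Finset.prod_eq_zero (Finset.mem_univ j) (if_neg hj)
  have hpair : ∀ c c' : (Fin n → _) → ℂ,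
      BT (∑ I, c I • dtpnE b n I) (∑ I, c' I • dtpnE b n I) = ∑ I, c I * c' I := by
    intro c c'
    have e1 : BT (∑ I, c I • dtpnE b n I) = ∑ I, c I • BT (dtpnE b n I) := by
      rw [map_sum]
      exact Finset.sum_congr rfl (fun I _ => by rw [map_smul])
    rw [e1, LinearMap.sum_apply]
    refine Finset.sum_congr rfl (fun I _ => ?_)
    rw [LinearMap.smul_apply, map_sum]
    simp only [map_smul, smul_eq_mul, hEE, mul_ite, mul_one, mul_zero]
    rw [Finset.sum_ite_eq Finset.univ I c']
    simp
  -- scalar multiples stay det-twisted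
  have hsmul : ∀ (s : ℂ) (w : ⨂[ℂ]^n H), w ∈ DetTw B A T n → s • w ∈ DetTw B A T n := by
    intro s w hw φ hφ
    rw [map_smul, hw φ hφ, smul_comm]
  -- the key construction
  have key : ∀ v ∈ DetTw B A T n, ∃ w ∈ DetTw B A T n, ∃ r : ℝ,
      0 ≤ r ∧ BT v w = (r : ℂ) ∧ (r = 0 → v = 0) := by
    intro v hv
    obtain ⟨c, hvc⟩ := dtpnSpan b n v
    set w : ⨂[ℂ]^n H := ∑ I, σ (c I) • dtpnE b n I with hwdef
    have hw : w ∈ DetTw B A T n := by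
      intro φ hφ
      obtain ⟨ψ, hψ, hψmat, hdet⟩ := dtpnPsi B A T bA bT b hbinl hbinr horth φ hφ
      have h1 : diagMap n ψ v = detOnT T ψ hψ.mapsT • v := hv ψ hψ
      rw [hdet, hvc] at h1
      have h2 := (dtpnCoord b n (ψ : H →ₗ[ℂ] H) c (σ (detOnT T φ hφ.mapsT))).1 h1
      have h3 : ∀ K, ∑ I, (∏ j, (LinearMap.toMatrix b b (φ : H →ₗ[ℂ] H)) (K j) (I j))
          * σ (c I) = detOnT T φ hφ.mapsT * σ (c K) := by
        intro K
        have h4 := congrArg σ (h2 K)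
        rw [map_sum σ] at h4
        rw [map_mul σ] at h4
        simp only [map_mul σ, map_prod σ, hψmat, Matrix.map_apply,
          Complex.conj_conj] at h4
        simpa [hσdef, Complex.conj_conj] using h4
      show diagMap n φ w = detOnT T φ hφ.mapsT • w
      rw [hwdef]
      exact (dtpnCoord b n (φ : H →ₗ[ℂ] H) (fun I => σ (c I)) (detOnT T φ hφ.mapsT)).2 h3
    refine ⟨w, hw, ∑ I, Complex.normSq (c I), ?_, ?_, ?_⟩
    · exact Finset.sum_nonneg (fun I _ => Complex.normSq_nonneg _)
    · rw [hvc, hwdef, hpair]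
      rw [Complex.ofReal_sum]
      exact Finset.sum_congr rfl (fun I _ => Complex.mul_conj _)
    · intro hr0
      have hall : ∀ I ∈ Finset.univ, Complex.normSq (c I) = 0 := by
        rw [← Finset.sum_eq_zero_iff_of_nonneg (fun I _ => Complex.normSq_nonneg _)]
        exact hr0
      have hc0 : ∀ I : Fin n → _, c I = 0 := fun I =>
        Complex.normSq_eq_zero.1 (hall I (Finset.mem_univ I))
      rw [hvc]
      rw [Finset.sum_congr rfl (fun I _ => by rw [hc0 I, zero_smul])]
      exact Finset.sum_const_zero
  constructor
  · intro v hv hperp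
    obtain ⟨w, hw, r, hr0, hbtw, himp⟩ := key v hv
    have : (r : ℂ) = 0 := by rw [← hbtw]; exact hperp w hw
    exact himp (by exact_mod_cast this)
  · intro v hv hv0
    obtain ⟨w, hw, r, hr0, hbtw, himp⟩ := key v hv
    have hrne : (r : ℂ) ≠ 0 := by
      intro h
      exact hv0 (himp (by exact_mod_cast h))
    refine ⟨((r : ℂ))⁻¹ • w, hsmul _ _ hw, ?_⟩
    rw [map_smul, smul_eq_mul, hbtw, inv_mul_cancel₀ hrne]
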